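/- For any interval I ⊆ ℕ_0, the map P_I : Ĵ(Φ) → Ĵ(Φ) defined by P_I((x_n)) = (x_n·χ_I(n)) is a well-defined bounded linear projection with ‖P_I‖ ≤ 1. -/

import Mathlib

open Filter Topology

/-- Composition `φ_n^m = φ_{m-1} ∘ ⋯ ∘ φ_n : X n →L X m` (junk value for `m < n`). -/
noncomputable def phiTo {X : ℕ → Type*} [∀ n, NormedAddCommGroup (X n)]
    [∀ n, NormedSpace ℝ (X n)] (φ : ∀ n, X n →L[ℝ] X (n + 1)) (n : ℕ) :
    (m : ℕ) → X n →L[ℝ] X m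
  | 0 => 0
  | m + 1 =>
    if h : m + 1 = n then by rw [h]; exact ContinuousLinearMap.id ℝ (X n)
    else (φ m).comp (phiTo φ n m)

open Classical in
/-- `σ(x,S)²`: the sum over consecutive pairs `p < q` of `S` of `‖φ_p^q(x_p) - x_q‖²`. -/
noncomputable def sigma2 {X : ℕ → Type*} [∀ n, NormedAddCommGroup (X n)]
    [∀ n, NormedSpace ℝ (X n)] (φ : ∀ n, X n →L[ℝ] X (n + 1))
    (x : ∀ n, X n) (S : Finset ℕ) : ℝ :=
  ∑ p ∈ S, ∑ q ∈ S,
    if p < q ∧ ∀ r ∈ S, ¬(p < r ∧ r < q) then ‖phiTo φ p q (x p) - x q‖ ^ 2 else 0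

noncomputable def sigmaJ {X : ℕ → Type*} [∀ n, NormedAddCommGroup (X n)]
    [∀ n, NormedSpace ℝ (X n)] (φ : ∀ n, X n →L[ℝ] X (n + 1))
    (x : ∀ n, X n) (S : Finset ℕ) : ℝ :=
  Real.sqrt (sigma2 φ x S)

/-- `ρ(x,S)² = σ(x,S)² + ‖x_{max S}‖²`. -/
noncomputable def rho2 {X : ℕ → Type*} [∀ n, NormedAddCommGroup (X n)]
    [∀ n, NormedSpace ℝ (X n)] (φ : ∀ n, X n →L[ℝ] X (n + 1))
    (x : ∀ n, X n) (S : Finset ℕ) (hS : S.Nonempty) : ℝ :=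
  sigma2 φ x S + ‖x (S.max' hS)‖ ^ 2

noncomputable def rhoJ {X : ℕ → Type*} [∀ n, NormedAddCommGroup (X n)]
    [∀ n, NormedSpace ℝ (X n)] (φ : ∀ n, X n →L[ℝ] X (n + 1))
    (x : ∀ n, X n) (S : Finset ℕ) (hS : S.Nonempty) : ℝ :=
  Real.sqrt (rho2 φ x S hS)

/-- The set of values `ρ(x,S)` over finite nonempty `S ⊆ ℕ`. -/
def rhoSet {X : ℕ → Type*} [∀ n, NormedAddCommGroup (X n)]
    [∀ n, NormedSpace ℝ (X n)] (φ : ∀ n, X n →L[ℝ] X (n + 1))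
    (x : ∀ n, X n) : Set ℝ :=
  {r : ℝ | ∃ (S : Finset ℕ) (hS : S.Nonempty), r = rhoJ φ x S hS}

/-- Membership in `Ĵ(Φ)`: `sup_S ρ(x,S) < ∞`. -/
def memJhat {X : ℕ → Type*} [∀ n, NormedAddCommGroup (X n)]
    [∀ n, NormedSpace ℝ (X n)] (φ : ∀ n, X n →L[ℝ] X (n + 1))
    (x : ∀ n, X n) : Prop :=
  BddAbove (rhoSet φ x)

/-- The norm `‖x‖_J = (1/√2) sup_S ρ(x,S)`. -/
noncomputable def normJ {X : ℕ → Type*} [∀ n, NormedAddCommGroup (X n)]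
    [∀ n, NormedSpace ℝ (X n)] (φ : ∀ n, X n →L[ℝ] X (n + 1))
    (x : ∀ n, X n) : ℝ :=
  (Real.sqrt 2)⁻¹ * sSup (rhoSet φ x)

/-- Membership in `J(Φ)`: member of `Ĵ(Φ)` with `‖x_n‖ → 0`. -/
def memJ {X : ℕ → Type*} [∀ n, NormedAddCommGroup (X n)]
    [∀ n, NormedSpace ℝ (X n)] (φ : ∀ n, X n →L[ℝ] X (n + 1))
    (x : ∀ n, X n) : Prop :=
  memJhat φ x ∧ Tendsto (fun n => ‖x n‖) atTop (𝓝 0)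

open Classical in
/-- The coordinate restriction `P_I`. -/
noncomputable def restrictSeq {X : ℕ → Type*} [∀ n, NormedAddCommGroup (X n)]
    (I : Set ℕ) (x : ∀ n, X n) : ∀ n, X n :=
  fun n => if n ∈ I then x n else 0

/-- The stepping map `Q_α`. -/
noncomputable def stepSeq {X : ℕ → Type*} [∀ n, NormedAddCommGroup (X n)]
    [∀ n, NormedSpace ℝ (X n)] (φ : ∀ n, X n →L[ℝ] X (n + 1))
    (α : ℕ → ℕ) (x : ∀ n, X n) : ∀ n, X n :=
  fun n => phiTo φ (α n) n (x (α n))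


section helpers
variable {X : ℕ → Type*} [∀ n, NormedAddCommGroup (X n)] [∀ n, NormedSpace ℝ (X n)]
  (φ : ∀ n, X n →L[ℝ] X (n + 1))

lemma phiTo_norm_le (hφ : ∀ n, ‖φ n‖ ≤ 1) (p : ℕ) (z : X p) :
    ∀ q, ‖phiTo φ p q z‖ ≤ ‖z‖ := by
  intro q
  induction q with
  | zero => simp [phiTo]
  | succ m ih =>
    by_cases h : m + 1 = p
    · subst h
      simp [phiTo]
    · rw [phiTo, dif_neg h]
      calc ‖(φ m) (phiTo φ p m z)‖ ≤ ‖φ m‖ * ‖phiTo φ p m z‖ := (φ m).le_opNorm _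
        _ ≤ 1 * ‖z‖ := by
            apply mul_le_mul (hφ m) ih (norm_nonneg _) zero_le_one
        _ = ‖z‖ := one_mul _

end helpers

lemma sum_ite_le_of_unique {ι : Type*} (s : Finset ι) (P : ι → Prop) [DecidablePred P]
    (f : ι → ℝ) (c : ℝ) (hc : 0 ≤ c) (hf : ∀ a ∈ s, P a → f a ≤ c)
    (hu : ∀ a ∈ s, ∀ b ∈ s, P a → P b → a = b) :
    ∑ a ∈ s, (if P a then f a else 0) ≤ c := by
  classical
  rw [← Finset.sum_filter]
  rcases (s.filter P).eq_empty_or_nonempty with h | ⟨a, ha⟩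
  · simp [h, hc]
  · have hsub : s.filter P = {a} := by
      apply Finset.eq_singleton_iff_unique_mem.mpr
      refine ⟨ha, fun b hb => ?_⟩
      exact hu b (Finset.mem_of_mem_filter _ hb) a (Finset.mem_of_mem_filter _ ha)
        (Finset.mem_filter.mp hb).2 (Finset.mem_filter.mp ha).2
    rw [hsub, Finset.sum_singleton]
    exact hf a (Finset.mem_of_mem_filter _ ha) (Finset.mem_filter.mp ha).2

open Classical in
lemma key_ineq {X : ℕ → Type*} [∀ n, NormedAddCommGroup (X n)] [∀ n, NormedSpace ℝ (X n)]
    [Subsingleton (X 0)]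
    (φ : ∀ n, X n →L[ℝ] X (n + 1)) (hφ : ∀ n, ‖φ n‖ ≤ 1)
    {I : Set ℕ} (hI : I.OrdConnected) (x : ∀ n, X n) (S : Finset ℕ) (hS : S.Nonempty)
    (hT : (S.filter (· ∈ I)).Nonempty) :
    rho2 φ (restrictSeq I x) S hS ≤
      rho2 φ x (insert 0 (S.filter (· ∈ I))) ((S.filter (· ∈ I)).insert_nonempty 0) := by
  classical
  set y := restrictSeq I x with hy
  set T := S.filter (· ∈ I) with hTdef
  have hTsub : T ⊆ S := Finset.filter_subset _ _
  have hmemT : ∀ {a : ℕ}, a ∈ T ↔ a ∈ S ∧ a ∈ I := by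
    intro a; simp [hTdef]
  set M := S.max' hS with hM
  set m0 := T.min' hT with hm0
  set m1 := T.max' hT with hm1
  have hm1S : m1 ∈ S := hTsub (T.max'_mem hT)
  have hm1I : m1 ∈ I := (hmemT.mp (T.max'_mem hT)).2
  have hm0T : m0 ∈ T := T.min'_mem hT
  have hm0I : m0 ∈ I := (hmemT.mp hm0T).2
  have hmax' : (insert 0 T).max' (T.insert_nonempty 0) = m1 := by
    rw [Finset.max'_insert 0 T hT]
    exact max_eq_right (Nat.zero_le _)
  -- interval property
  have hIcc : ∀ {a b c : ℕ}, a ∈ I → c ∈ I → a ≤ b → b ≤ c → b ∈ I := by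
    intro a b c ha hc h1 h2
    exact hI.out ha hc ⟨h1, h2⟩
  set Cs : ℕ → ℕ → Prop := fun p q => p < q ∧ ∀ r ∈ S, ¬(p < r ∧ r < q) with hCs
  set A := ∑ p ∈ S, ∑ q ∈ S, if Cs p q ∧ p ∈ I ∧ q ∈ I then ‖phiTo φ p q (x p) - x q‖^2 else 0 with hAdef
  set B := ∑ p ∈ S, ∑ q ∈ S, if Cs p q ∧ p ∉ I ∧ q ∈ I then ‖x q‖^2 else 0 with hBdef
  set C := ∑ p ∈ S, ∑ q ∈ S, if Cs p q ∧ p ∈ I ∧ q ∉ I then ‖phiTo φ p q (x p)‖^2 else 0 with hCdef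
  set E := if (0:ℕ) ∈ T then (0:ℝ) else ‖x m0‖^2 with hEdef
  have hsplit : sigma2 φ y S = A + B + C := by
    have hpt : ∀ p ∈ S, ∀ q ∈ S,
        (if Cs p q then ‖phiTo φ p q (y p) - y q‖^2 else 0) =
          (if Cs p q ∧ p ∈ I ∧ q ∈ I then ‖phiTo φ p q (x p) - x q‖^2 else 0) +
          (if Cs p q ∧ p ∉ I ∧ q ∈ I then ‖x q‖^2 else 0) +
          (if Cs p q ∧ p ∈ I ∧ q ∉ I then ‖phiTo φ p q (x p)‖^2 else 0) := by
      intro p _ q _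
      by_cases hp : p ∈ I <;> by_cases hq : q ∈ I <;>
        simp [hy, restrictSeq, hp, hq, sub_zero, zero_sub, norm_neg]
    calc sigma2 φ y S
        = ∑ p ∈ S, ∑ q ∈ S,
          ((if Cs p q ∧ p ∈ I ∧ q ∈ I then ‖phiTo φ p q (x p) - x q‖^2 else 0) +
           (if Cs p q ∧ p ∉ I ∧ q ∈ I then ‖x q‖^2 else 0) +
           (if Cs p q ∧ p ∈ I ∧ q ∉ I then ‖phiTo φ p q (x p)‖^2 else 0)) := by
          rw [sigma2]
          exact Finset.sum_congr rfl fun p hp => Finset.sum_congr rfl fun q hq => hpt p hp q hq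
      _ = A + B + C := by
          rw [hAdef, hBdef, hCdef]
          simp [Finset.sum_add_distrib]
  have hcondT : ∀ p ∈ T, ∀ q ∈ T,
      (Cs p q ∧ p ∈ I ∧ q ∈ I) ↔ (p < q ∧ ∀ r ∈ T, ¬(p < r ∧ r < q)) := by
    intro p hp q hq
    constructor
    · rintro ⟨⟨hlt, hmid⟩, -, -⟩
      exact ⟨hlt, fun r hr => hmid r (hTsub hr)⟩
    · rintro ⟨hlt, hmid⟩
      refine ⟨⟨hlt, fun r hr hcon => ?_⟩, (hmemT.mp hp).2, (hmemT.mp hq).2⟩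
      have hrI : r ∈ I := hIcc (hmemT.mp hp).2 (hmemT.mp hq).2 hcon.1.le hcon.2.le
      exact hmid r (hmemT.mpr ⟨hr, hrI⟩) hcon
  have hA : A = sigma2 φ x T := by
    rw [hAdef, sigma2]
    rw [← Finset.sum_subset hTsub (fun p hpS hpT => Finset.sum_eq_zero fun q hq => by
      rw [if_neg]; rintro ⟨-, hpI, -⟩; exact hpT (hmemT.mpr ⟨hpS, hpI⟩))]
    refine Finset.sum_congr rfl fun p hp => ?_
    rw [← Finset.sum_subset hTsub (fun q hqS hqT => by
      rw [if_neg]; rintro ⟨-, -, hqI⟩; exact hqT (hmemT.mpr ⟨hqS, hqI⟩))]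
    refine Finset.sum_congr rfl fun q hq => ?_
    exact if_congr (hcondT p hp q hq) rfl rfl
  have hx0 : x 0 = 0 := Subsingleton.elim _ _
  have ha : sigma2 φ x (insert 0 T) = sigma2 φ x T + E := by
    by_cases h0 : (0:ℕ) ∈ T
    · rw [Finset.insert_eq_self.mpr h0, hEdef, if_pos h0, add_zero]
    · have hm0pos : 0 < m0 := Nat.pos_of_ne_zero (fun h => h0 (h ▸ hm0T))
      have hcondT' : ∀ p ∈ T, ∀ q ∈ T,
          (p < q ∧ ∀ r ∈ insert 0 T, ¬(p < r ∧ r < q)) ↔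
          (p < q ∧ ∀ r ∈ T, ¬(p < r ∧ r < q)) := by
        intro p hp q hq
        constructor
        · rintro ⟨hlt, hmid⟩
          exact ⟨hlt, fun r hr => hmid r (Finset.mem_insert_of_mem hr)⟩
        · rintro ⟨hlt, hmid⟩
          refine ⟨hlt, fun r hr hcon => ?_⟩
          rcases Finset.mem_insert.mp hr with rfl | hr
          · exact absurd hcon.1 (Nat.not_lt_zero p).elim
          · exact hmid r hr hcon
      rw [sigma2, Finset.sum_insert h0]
      have hinner0 : (∑ q ∈ insert 0 T,
          if 0 < q ∧ ∀ r ∈ insert 0 T, ¬(0 < r ∧ r < q) then ‖phiTo φ 0 q (x 0) - x q‖^2 else 0)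
          = ‖x m0‖^2 := by
        have hpt : ∀ q ∈ insert 0 T,
            (if 0 < q ∧ ∀ r ∈ insert 0 T, ¬(0 < r ∧ r < q) then ‖phiTo φ 0 q (x 0) - x q‖^2 else 0)
            = (if q = m0 then ‖x m0‖^2 else 0) := by
          intro q hq
          by_cases hqm : q = m0
          · subst hqm
            rw [if_pos, if_pos rfl, hx0, map_zero, zero_sub, norm_neg]
            refine ⟨hm0pos, fun r hr hcon => ?_⟩
            rcases Finset.mem_insert.mp hr with rfl | hr
            · exact lt_irrefl 0 hcon.1
            · exact absurd (T.min'_le r hr) (not_le.mpr hcon.2)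
          · rw [if_neg, if_neg hqm]
            rintro ⟨hq0, hmid⟩
            rcases Finset.mem_insert.mp hq with rfl | hqT
            · exact lt_irrefl 0 hq0
            · have : m0 < q := lt_of_le_of_ne (T.min'_le q hqT) (fun h => hqm h.symm)
              exact hmid m0 (Finset.mem_insert_of_mem hm0T) ⟨hm0pos, this⟩
        refine Eq.trans ?_ ((Finset.sum_congr rfl hpt).trans ?_)
        · congr!
        rw [Finset.sum_ite_eq' (insert 0 T) m0 (fun _ => ‖x m0‖^2),
          if_pos (Finset.mem_insert_of_mem hm0T)]
      have hrest : (∑ p ∈ T, ∑ q ∈ insert 0 T,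
          if p < q ∧ ∀ r ∈ insert 0 T, ¬(p < r ∧ r < q) then ‖phiTo φ p q (x p) - x q‖^2 else 0)
          = sigma2 φ x T := by
        rw [sigma2]
        refine Finset.sum_congr rfl fun p hp => ?_
        rw [Finset.sum_insert h0]
        have : (if p < 0 ∧ ∀ r ∈ insert 0 T, ¬(p < r ∧ r < 0) then ‖phiTo φ p 0 (x p) - x 0‖^2 else 0) = 0 := by
          rw [if_neg]; rintro ⟨h, -⟩; exact Nat.not_lt_zero p h
        rw [if_neg (by rintro ⟨h, -⟩; exact Nat.not_lt_zero p h), zero_add]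
        refine Finset.sum_congr rfl fun q hq => ?_
        convert if_congr (hcondT' p hp q hq) rfl rfl
      rw [hEdef, if_neg h0, add_comm (sigma2 φ x T)]
      convert congrArg₂ HAdd.hAdd hinner0 hrest
  have hb : B ≤ E := by
    by_cases h0 : (0:ℕ) ∈ T
    · have h0I : (0:ℕ) ∈ I := (hmemT.mp h0).2
      rw [hEdef, if_pos h0, hBdef]
      refine le_of_eq (Finset.sum_eq_zero fun p hp => Finset.sum_eq_zero fun q hq => ?_)
      rw [if_neg]
      rintro ⟨⟨hlt, -⟩, hpI, hqI⟩
      exact hpI (hIcc h0I hqI (Nat.zero_le p) hlt.le)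
    · rw [hEdef, if_neg h0, hBdef, ← Finset.sum_product']
      have hqm0 : ∀ a : ℕ × ℕ, a ∈ S ×ˢ S → (Cs a.1 a.2 ∧ a.1 ∉ I ∧ a.2 ∈ I) → a.2 = m0 := by
        rintro ⟨p, q⟩ hmem ⟨⟨hlt, hmid⟩, hpI, hqI⟩
        have hqT : q ∈ T := hmemT.mpr ⟨(Finset.mem_product.mp hmem).2, hqI⟩
        by_contra hne
        have hm0q : m0 < q := lt_of_le_of_ne (T.min'_le q hqT) (fun h => hne h.symm)
        rcases lt_trichotomy p m0 with h | h | h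
        · exact hmid m0 (hTsub hm0T) ⟨h, hm0q⟩
        · exact hpI (h ▸ hm0I)
        · exact hpI (hIcc hm0I hqI h.le hlt.le)
      refine sum_ite_le_of_unique _ _ _ _ (by positivity) ?_ ?_
      · rintro ⟨p, q⟩ hmem hP
        rw [hqm0 _ hmem hP]
      · rintro ⟨p, q⟩ hmem ⟨p', q'⟩ hmem' hP hP'
        have hq : q = m0 := hqm0 _ hmem hP
        have hq' : q' = m0 := hqm0 _ hmem' hP'
        subst hq; subst hq'
        have hpp : p = p' := by
          rcases lt_trichotomy p p' with h | h | h
          · exact absurd ⟨h, hP'.1.1⟩ (hP.1.2 p' (Finset.mem_product.mp hmem').1)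
          · exact h
          · exact absurd ⟨h, hP.1.1⟩ (hP'.1.2 p (Finset.mem_product.mp hmem).1)
        rw [hpp]
  have hc : C + ‖y M‖^2 ≤ ‖x m1‖^2 := by
    by_cases hMI : M ∈ I
    · have hMT : M ∈ T := hmemT.mpr ⟨S.max'_mem hS, hMI⟩
      have hMm1 : M = m1 := le_antisymm (T.le_max' M hMT) (S.le_max' m1 hm1S)
      have hC0 : C = 0 := by
        rw [hCdef]
        refine Finset.sum_eq_zero fun p hp => Finset.sum_eq_zero fun q hq => ?_
        rw [if_neg]
        rintro ⟨⟨hlt, -⟩, hpI, hqI⟩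
        exact hqI (hIcc hpI hMI hlt.le (S.le_max' q hq))
      rw [hC0, zero_add, hy]
      show ‖if M ∈ I then x M else 0‖^2 ≤ ‖x m1‖^2
      rw [if_pos hMI, hMm1]
    · have hyM : ‖y M‖^2 = 0 := by
        rw [hy]; simp [restrictSeq, hMI]
      rw [hyM, add_zero, hCdef, ← Finset.sum_product']
      have hpm1 : ∀ a : ℕ × ℕ, a ∈ S ×ˢ S → (Cs a.1 a.2 ∧ a.1 ∈ I ∧ a.2 ∉ I) → a.1 = m1 := by
        rintro ⟨p, q⟩ hmem ⟨⟨hlt, hmid⟩, hpI, hqI⟩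
        have hpT : p ∈ T := hmemT.mpr ⟨(Finset.mem_product.mp hmem).1, hpI⟩
        by_contra hne
        have hpm : p < m1 := lt_of_le_of_ne (T.le_max' p hpT) hne
        rcases lt_trichotomy q m1 with h | h | h
        · exact hqI (hIcc hpI hm1I hlt.le h.le)
        · exact hqI (h ▸ hm1I)
        · exact hmid m1 hm1S ⟨hpm, h⟩
      refine sum_ite_le_of_unique _ _ _ _ (by positivity) ?_ ?_
      · rintro ⟨p, q⟩ hmem hP
        have hp : p = m1 := hpm1 _ hmem hP
        rw [hp]
        exact pow_le_pow_left₀ (norm_nonneg _) (phiTo_norm_le φ hφ m1 (x m1) q) 2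
      · rintro ⟨p, q⟩ hmem ⟨p', q'⟩ hmem' hP hP'
        have hp : p = m1 := hpm1 _ hmem hP
        have hp' : p' = m1 := hpm1 _ hmem' hP'
        subst hp; subst hp'
        have hqq : q = q' := by
          rcases lt_trichotomy q q' with h | h | h
          · exact absurd ⟨hP.1.1, h⟩ (hP'.1.2 q (Finset.mem_product.mp hmem).2)
          · exact h
          · exact absurd ⟨hP'.1.1, h⟩ (hP.1.2 q' (Finset.mem_product.mp hmem').2)
        rw [hqq]
  have : rho2 φ y S hS = A + B + (C + ‖y M‖^2) := by
    rw [rho2, hsplit]; ring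
  rw [this, rho2, hmax', ha, hA]
  linarith

/-- for any interval `I ⊆ ℕ`, the coordinate restriction `P_I` is a
well-defined bounded linear projection on `Ĵ(Φ)` of norm at most `1`. -/
theorem stmt7 {X : ℕ → Type*} [∀ n, NormedAddCommGroup (X n)] [∀ n, NormedSpace ℝ (X n)]
    [∀ n, CompleteSpace (X n)] [Subsingleton (X 0)]
    (φ : ∀ n, X n →L[ℝ] X (n + 1)) (hφ : ∀ n, ‖φ n‖ ≤ 1)
    (I : Set ℕ) (hI : I.OrdConnected) :
    (∀ x y : ∀ n, X n, restrictSeq I (x + y) = restrictSeq I x + restrictSeq I y) ∧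
    (∀ (c : ℝ) (x : ∀ n, X n), restrictSeq I (c • x) = c • restrictSeq I x) ∧
    (∀ x : ∀ n, X n, restrictSeq I (restrictSeq I x) = restrictSeq I x) ∧
    (∀ x : ∀ n, X n, memJhat φ x →
      memJhat φ (restrictSeq I x) ∧ normJ φ (restrictSeq I x) ≤ normJ φ x) := by
  classical
  refine ⟨?_, ?_, ?_, ?_⟩
  · intro x y; funext n; simp only [restrictSeq, Pi.add_apply]; split_ifs <;> simp
  · intro c x; funext n; simp only [restrictSeq, Pi.smul_apply]; split_ifs <;> simp
  · intro x; funext n; simp only [restrictSeq]; split_ifs <;> simp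
  · intro x hx
    set y := restrictSeq I x with hy
    have hmem0 : rhoJ φ x {0} (Finset.singleton_nonempty 0) ∈ rhoSet φ x :=
      ⟨{0}, Finset.singleton_nonempty 0, rfl⟩
    have hsup0 : 0 ≤ sSup (rhoSet φ x) :=
      le_trans (Real.sqrt_nonneg _) (le_csSup hx hmem0)
    have claim : ∀ (S : Finset ℕ) (hS : S.Nonempty), rhoJ φ y S hS ≤ sSup (rhoSet φ x) := by
      intro S hS
      by_cases hT : (S.filter (· ∈ I)).Nonempty
      · have h1 := key_ineq φ hφ hI x S hS hT
        have h2 : rhoJ φ y S hS ≤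
            rhoJ φ x (insert 0 (S.filter (· ∈ I))) ((S.filter (· ∈ I)).insert_nonempty 0) :=
          Real.sqrt_le_sqrt h1
        exact h2.trans (le_csSup hx ⟨_, _, rfl⟩)
      · have hzero : ∀ p ∈ S, y p = 0 := by
          intro p hp
          have hpI : p ∉ I := fun h => hT ⟨p, Finset.mem_filter.mpr ⟨hp, h⟩⟩
          simp [hy, restrictSeq, hpI]
        have hr0 : rho2 φ y S hS = 0 := by
          rw [rho2]
          have h1 : sigma2 φ y S = 0 := by
            rw [sigma2]
            refine Finset.sum_eq_zero fun p hp => Finset.sum_eq_zero fun q hq => ?_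
            rw [hzero p hp, hzero q hq, map_zero, sub_zero, norm_zero]
            simp
          rw [h1, hzero _ (S.max'_mem hS)]
          simp
        rw [rhoJ, hr0, Real.sqrt_zero]
        exact hsup0
    have hyBdd : BddAbove (rhoSet φ y) := by
      refine ⟨sSup (rhoSet φ x), fun r hr => ?_⟩
      obtain ⟨S, hS, rfl⟩ := hr
      exact claim S hS
    refine ⟨hyBdd, ?_⟩
    rw [normJ, normJ]
    refine mul_le_mul_of_nonneg_left ?_ (by positivity)
    refine csSup_le ⟨_, ⟨{0}, Finset.singleton_nonempty 0, rfl⟩⟩ ?_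
    rintro r ⟨S, hS, rfl⟩
    exact claim S hS
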